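/- Let p₁ and p₂ be distinct odd primes and n₁, n₂ positive integers, and set n = p₁^{n₁}·p₂^{n₂}. Then the unit graph G(Z_n) is connected and its diameter is at most 2; that is, any two distinct vertices of G(Z_n) are joined by a path of length at most 2. -/

import Mathlib

/-- The unit graph of `ZMod m`: distinct vertices `x, y` are adjacent iff `x + y` is a unit. -/
def unitGraph (m : ℕ) : SimpleGraph (ZMod m) where
  Adj x y := x ≠ y ∧ IsUnit (x + y)
  symm := by
    constructor
    intro x y h
    exact ⟨h.1.symm, by rw [add_comm]; exact h.2⟩
  loopless := by
    constructor
    intro x h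
    exact h.1 rfl

lemma prod_isUnit_iff {R S : Type*} [Monoid R] [Monoid S] (x : R × S) :
    IsUnit x ↔ IsUnit x.1 ∧ IsUnit x.2 := by
  constructor
  · intro h
    exact ⟨h.map (MonoidHom.fst R S), h.map (MonoidHom.snd R S)⟩
  · rintro ⟨⟨u, hu⟩, ⟨v, hv⟩⟩
    exact ⟨MulEquiv.prodUnits.symm (u, v), Prod.ext hu hv⟩

lemma isUnit_zmod_pow_iff {p k : ℕ} (hp : p.Prime) (hk : 0 < k) (x : ZMod (p ^ k)) :
    IsUnit x ↔ (ZMod.castHom (dvd_pow_self p hk.ne') (ZMod p)) x ≠ 0 := by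
  haveI : NeZero (p ^ k) := ⟨pow_ne_zero _ hp.pos.ne'⟩
  have hx : x = ((x.val : ℕ) : ZMod (p ^ k)) := by rw [ZMod.natCast_val, ZMod.cast_id]
  rw [ZMod.castHom_apply, ← ZMod.natCast_val]
  rw [Ne, ZMod.natCast_eq_zero_iff]
  constructor
  · intro h hdvd
    rw [hx, ZMod.isUnit_iff_coprime] at h
    have h1 : p ∣ Nat.gcd x.val (p ^ k) := Nat.dvd_gcd hdvd (dvd_pow_self p hk.ne')
    rw [Nat.Coprime] at h
    rw [h] at h1
    exact hp.one_lt.ne' (Nat.eq_one_of_dvd_one h1)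
  · intro h
    rw [hx, ZMod.isUnit_iff_coprime]
    rw [Nat.coprime_pow_right_iff hk]
    exact (Nat.coprime_comm.mp (hp.coprime_iff_not_dvd.mpr h))

lemma comp_exists {p k : ℕ} (hp : p.Prime) (hodd : Odd p) (hk : 0 < k) (a b : ZMod (p ^ k)) :
    ∃ z : ZMod (p ^ k), IsUnit (a + z) ∧ IsUnit (b + z) := by
  haveI : Fact p.Prime := ⟨hp⟩
  set φ := ZMod.castHom (dvd_pow_self p hk.ne') (ZMod p) with hφ
  -- find w ≠ -φ a, -φ b
  have hcard : 2 < Fintype.card (ZMod p) := by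
    rw [ZMod.card]
    have h2 := hp.two_le
    have h3 : p ≠ 2 := by
      intro h
      have := Nat.odd_iff.mp hodd
      omega
    omega
  obtain ⟨w, hw1, hw2⟩ : ∃ w : ZMod p, w ≠ -φ a ∧ w ≠ -φ b := by
    by_contra hcon
    push_neg at hcon
    have : (Finset.univ : Finset (ZMod p)) ⊆ {-φ a, -φ b} := by
      intro w _
      rcases em (w = -φ a) with h | h
      · simp [h]
      · simp [hcon w h]
    have := Finset.card_le_card this
    simp only [Finset.card_univ] at this
    have hle : ({-φ a, -φ b} : Finset (ZMod p)).card ≤ 2 :=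
      (Finset.card_insert_le _ _).trans (by simp)
    omega
  obtain ⟨z, hz⟩ : ∃ z : ZMod (p ^ k), φ z = w := ZMod.ringHom_surjective φ w
  refine ⟨z, ?_, ?_⟩
  · rw [isUnit_zmod_pow_iff hp hk, map_add, hz]
    intro h
    exact hw1 (by linear_combination h)
  · rw [isUnit_zmod_pow_iff hp hk, map_add, hz]
    intro h
    exact hw2 (by linear_combination h)

theorem unitGraph_twoOddPrimes_connected_diam (p₁ p₂ n₁ n₂ : ℕ)
    (hp₁ : p₁.Prime) (hp₂ : p₂.Prime) (hodd₁ : Odd p₁) (hodd₂ : Odd p₂)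
    (hne : p₁ ≠ p₂) (hn₁ : 0 < n₁) (hn₂ : 0 < n₂) :
    (unitGraph (p₁ ^ n₁ * p₂ ^ n₂)).Connected ∧
    ∀ x y : ZMod (p₁ ^ n₁ * p₂ ^ n₂), x ≠ y →
      (unitGraph (p₁ ^ n₁ * p₂ ^ n₂)).dist x y ≤ 2 := by
  set n := p₁ ^ n₁ * p₂ ^ n₂ with hn
  have hcop : (p₁ ^ n₁).Coprime (p₂ ^ n₂) :=
    Nat.Coprime.pow _ _ ((Nat.coprime_primes hp₁ hp₂).mpr hne)
  let e := ZMod.chineseRemainder hcop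
  -- key existence
  have key : ∀ a b : ZMod n, ∃ z : ZMod n, IsUnit (a + z) ∧ IsUnit (b + z) := by
    intro a b
    obtain ⟨z₁, hz₁a, hz₁b⟩ := comp_exists hp₁ hodd₁ hn₁ (e a).1 (e b).1
    obtain ⟨z₂, hz₂a, hz₂b⟩ := comp_exists hp₂ hodd₂ hn₂ (e a).2 (e b).2
    refine ⟨e.symm (z₁, z₂), ?_, ?_⟩
    · have : e (a + e.symm (z₁, z₂)) = ((e a).1 + z₁, (e a).2 + z₂) := by
        rw [map_add, e.apply_symm_apply]; rfl
      have hu : IsUnit (e (a + e.symm (z₁, z₂))) := by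
        rw [this, prod_isUnit_iff]; exact ⟨hz₁a, hz₂a⟩
      have := hu.map e.symm.toRingHom
      simpa using this
    · have : e (b + e.symm (z₁, z₂)) = ((e b).1 + z₁, (e b).2 + z₂) := by
        rw [map_add, e.apply_symm_apply]; rfl
      have hu : IsUnit (e (b + e.symm (z₁, z₂))) := by
        rw [this, prod_isUnit_iff]; exact ⟨hz₁b, hz₂b⟩
      have := hu.map e.symm.toRingHom
      simpa using this
  -- walk of length ≤ 2 between any two distinct vertices
  have walk2 : ∀ x y : ZMod n, x ≠ y →
      ∃ w : (unitGraph n).Walk x y, w.length ≤ 2 := by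
    intro x y hxy
    by_cases hu : IsUnit (x + y)
    · exact ⟨(show (unitGraph n).Adj x y from ⟨hxy, hu⟩).toWalk, by simp [SimpleGraph.Adj.toWalk]⟩
    · obtain ⟨z, hxz, hyz⟩ := key x y
      have hzx : z ≠ x := by rintro rfl; exact hu (by rwa [add_comm] at hyz)
      have hzy : z ≠ y := by rintro rfl; exact hu hxz
      have a1 : (unitGraph n).Adj x z := ⟨hzx.symm, hxz⟩
      have a2 : (unitGraph n).Adj z y := ⟨hzy, by rwa [add_comm] at hyz⟩
      exact ⟨a1.toWalk.append a2.toWalk, by simp [SimpleGraph.Adj.toWalk]⟩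
  have hconn : (unitGraph n).Connected := by
    rw [SimpleGraph.connected_iff]
    refine ⟨fun x y => ?_, ⟨0⟩⟩
    by_cases hxy : x = y
    · exact hxy ▸ SimpleGraph.Reachable.refl x
    · obtain ⟨w, _⟩ := walk2 x y hxy
      exact ⟨w⟩
  refine ⟨hconn, fun x y hxy => ?_⟩
  obtain ⟨w, hw⟩ := walk2 x y hxy
  exact (SimpleGraph.dist_le w).trans hw
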